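/- Let h : ℝ → H be a continuous homomorphism into a topological abelian group H, and give ℝ^(ℕ) the topology 𝒯_H induced by the embedding (x_k) ↦ ((x_k), (h(x_k))) into L_G(s) × 𝔉₀(H). Then 𝒯_H is weaker than the box topology on ℝ^(ℕ); in particular the map (x_k) ↦ (h(x_k)) from (ℝ^(ℕ), box topology) to 𝔉₀(H) is continuous. -/

import Mathlib

open Filter Topology

/-- `t` is a locally convex vector topology on `ℝ^(ℕ)` (the finitely supported real
sequences). -/
def IsLCVectorTopology (t : TopologicalSpace (ℕ →₀ ℝ)) : Prop :=
  @IsTopologicalAddGroup (ℕ →₀ ℝ) t _ ∧ @ContinuousSMul ℝ (ℕ →₀ ℝ) _ _ t ∧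
    @LocallyConvexSpace ℝ (ℕ →₀ ℝ) _ _ _ _ t

/-- `ν` is the finest locally convex vector topology on `ℝ^(ℕ)` in which the standard
basis vectors `e_n = single n 1` converge to `0` (this is the topology of the Graev
free locally convex space `L_G(s)`). -/
def IsNuTopology (ν : TopologicalSpace (ℕ →₀ ℝ)) : Prop :=
  IsLCVectorTopology ν ∧
  Tendsto (fun n : ℕ => Finsupp.single n (1 : ℝ)) atTop (@nhds (ℕ →₀ ℝ) ν 0) ∧
  ∀ t : TopologicalSpace (ℕ →₀ ℝ), IsLCVectorTopology t →
    Tendsto (fun n : ℕ => Finsupp.single n (1 : ℝ)) atTop (@nhds (ℕ →₀ ℝ) t 0) → ν ≤ t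

/-- The box topology on `ℝ^(ℕ)`. -/
def boxTopology : TopologicalSpace (ℕ →₀ ℝ) :=
  TopologicalSpace.generateFrom
    {U : Set (ℕ →₀ ℝ) | ∀ x ∈ U, ∃ a : ℕ → ℝ, (∀ n, 0 < a n) ∧
      {y : ℕ →₀ ℝ | ∀ n, |y n - x n| < a n} ⊆ U}

/-- The uniform topology on the group `H^ℕ` of `H`-valued sequences: a set is open iff
around each of its points it contains a set `x + {y | ∀ n, y n ∈ V}` for some
neighborhood `V` of `0` in `H`.  (Its restriction to `c₀(H)` is the topology of
`𝔉₀(H)`.) -/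
def uniformSeqTopology (H : Type*) [AddGroup H] [TopologicalSpace H] :
    TopologicalSpace (ℕ → H) :=
  TopologicalSpace.generateFrom
    {U : Set (ℕ → H) | ∀ x ∈ U, ∃ V ∈ nhds (0 : H), {y : ℕ → H | ∀ n, y n - x n ∈ V} ⊆ U}

lemma convex_sum_mem_of_le_one {E : Type*} [AddCommGroup E] [Module ℝ E] {s : Set E}
    (hs : Convex ℝ s) (h0 : (0:E) ∈ s) {ι : Type*} (t : Finset ι) (w : ι → ℝ) (p : ι → E)
    (hw0 : ∀ i ∈ t, 0 ≤ w i) (hw1 : ∑ i ∈ t, w i ≤ 1) (hp : ∀ i ∈ t, p i ∈ s) :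
    ∑ i ∈ t, w i • p i ∈ s := by
  rcases eq_or_lt_of_le (Finset.sum_nonneg hw0) with hc | hc
  · have hz : ∀ i ∈ t, w i = 0 := (Finset.sum_eq_zero_iff_of_nonneg hw0).mp hc.symm
    have : ∑ i ∈ t, w i • p i = 0 := Finset.sum_eq_zero fun i hi => by simp [hz i hi]
    rw [this]; exact h0
  · have hsum : ∑ i ∈ t, w i / (∑ i ∈ t, w i) = 1 := by
      rw [← Finset.sum_div]; exact div_self hc.ne'
    have hmem := hs.sum_mem (fun i hi => div_nonneg (hw0 i hi) hc.le) hsum hp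
    have he : ∑ i ∈ t, w i • p i = (∑ i ∈ t, w i) • ∑ i ∈ t, (w i / (∑ i ∈ t, w i)) • p i := by
      rw [Finset.smul_sum]
      refine Finset.sum_congr rfl fun i hi => ?_
      rw [smul_smul, mul_div_cancel₀ _ hc.ne']
    rw [he]
    exact hs.smul_mem_of_zero_mem h0 hmem ⟨hc.le, hw1⟩

lemma half_pow_sum_le_one (S : Finset ℕ) : ∑ n ∈ S, ((1:ℝ)/2)^(n+1) ≤ 1 := by
  have hsub : S ⊆ Finset.range (S.sup id + 1) := fun n hn =>
    Finset.mem_range.mpr (Nat.lt_succ_of_le (Finset.le_sup (f := id) hn))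
  have h1 : ∑ n ∈ S, ((1:ℝ)/2)^(n+1) ≤ ∑ n ∈ Finset.range (S.sup id + 1), ((1:ℝ)/2)^(n+1) :=
    Finset.sum_le_sum_of_subset_of_nonneg hsub (fun n _ _ => by positivity)
  refine h1.trans ?_
  have hgeom : ∀ N : ℕ, ∑ n ∈ Finset.range N, ((1:ℝ)/2)^(n+1) = 1 - (1/2)^N := by
    intro N
    induction N with
    | zero => simp
    | succ k ih => rw [Finset.sum_range_succ, ih]; ring
  rw [hgeom]
  have : (0:ℝ) ≤ (1/2)^(S.sup id + 1) := by positivity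
  linarith

lemma box_le_of_LC (t : TopologicalSpace (ℕ →₀ ℝ))
    (hadd : @IsTopologicalAddGroup (ℕ →₀ ℝ) t _)
    (hsmul : @ContinuousSMul ℝ (ℕ →₀ ℝ) _ _ t)
    (hconv : @LocallyConvexSpace ℝ (ℕ →₀ ℝ) _ _ _ _ t) :
    boxTopology ≤ t := by
  intro U hU
  apply TopologicalSpace.GenerateOpen.basic
  intro x hx
  letI := t
  haveI := hadd; haveI := hsmul; haveI := hconv
  -- U is a t-neighborhood of x; translate to 0
  have hV : (fun z : ℕ →₀ ℝ => x + z) ⁻¹' U ∈ 𝓝 (0 : ℕ →₀ ℝ) := by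
    have hc : Continuous (fun z : ℕ →₀ ℝ => x + z) := continuous_const.add continuous_id
    have : U ∈ 𝓝 ((fun z : ℕ →₀ ℝ => x + z) 0) := by
      simpa using hU.mem_nhds hx
    exact hc.continuousAt.preimage_mem_nhds this
  obtain ⟨W, ⟨hW, hWconv⟩, hWV⟩ :=
    ((LocallyConvexSpace.convex_basis (𝕜 := ℝ) (0 : ℕ →₀ ℝ)).mem_iff.mp hV)
  have hW0 : (0 : ℕ →₀ ℝ) ∈ W := mem_of_mem_nhds hW
  -- for each n choose ε n
  have key : ∀ n : ℕ, ∃ ε : ℝ, 0 < ε ∧ ∀ c : ℝ, |c| < ε → c • Finsupp.single n (1:ℝ) ∈ W := by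
    intro n
    have hc : Continuous (fun c : ℝ => c • Finsupp.single n (1:ℝ)) :=
      continuous_id.smul continuous_const
    have h0 : (fun c : ℝ => c • Finsupp.single n (1:ℝ)) 0 = 0 := by simp
    have : (fun c : ℝ => c • Finsupp.single n (1:ℝ)) ⁻¹' W ∈ 𝓝 (0:ℝ) :=
      hc.continuousAt.preimage_mem_nhds (by simpa using hW)
    obtain ⟨ε, hε, hball⟩ := Metric.mem_nhds_iff.mp this
    exact ⟨ε, hε, fun c hc' => hball (by simpa [Real.dist_eq] using hc')⟩
  choose ε hεpos hεmem using key
  refine ⟨fun n => ε n * (1/2)^(n+1), fun n => mul_pos (hεpos n) (by positivity), ?_⟩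
  intro y hy
  set z : ℕ →₀ ℝ := y - x with hz
  have hzn : ∀ n, |z n| < ε n * (1/2)^(n+1) := by
    intro n; simpa [hz, Finsupp.sub_apply] using hy n
  have hzW : z ∈ W := by
    have hrepr : z = ∑ n ∈ z.support, ((1:ℝ)/2)^(n+1) •
        (((2:ℝ)^(n+1) * z n) • Finsupp.single n (1:ℝ)) := by
      have : ∀ n ∈ z.support, ((1:ℝ)/2)^(n+1) •
          (((2:ℝ)^(n+1) * z n) • Finsupp.single n (1:ℝ)) = Finsupp.single n (z n) := by
        intro n _
        rw [smul_smul, Finsupp.smul_single]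
        congr 1
        rw [div_pow, one_pow]
        field_simp
        simp
      rw [Finset.sum_congr rfl this]
      exact (Finsupp.sum_single z).symm
    rw [hrepr]
    refine convex_sum_mem_of_le_one hWconv hW0 _ _ _
      (fun n _ => by positivity) (half_pow_sum_le_one _) ?_
    intro n _
    apply hεmem
    have h2 : (0:ℝ) < (2:ℝ)^(n+1) := by positivity
    rw [abs_mul, abs_of_pos h2]
    calc (2:ℝ)^(n+1) * |z n| < (2:ℝ)^(n+1) * (ε n * (1/2)^(n+1)) := by
          exact mul_lt_mul_of_pos_left (hzn n) h2
      _ = ε n := by rw [div_pow, one_pow]; field_simp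
  have : x + z ∈ U := hWV hzW
  simpa [hz] using this

lemma uniform_cont {H : Type*} [AddCommGroup H] [TopologicalSpace H] [IsTopologicalAddGroup H]
    (h : ℝ →+ H) (hh : Continuous h) :
    Continuous[boxTopology, uniformSeqTopology H]
      (fun x : ℕ →₀ ℝ => fun k : ℕ => h (x k)) := by
  rw [uniformSeqTopology, continuous_generateFrom_iff]
  intro s hs
  apply TopologicalSpace.GenerateOpen.basic
  intro x hx
  obtain ⟨V, hV, hVs⟩ := hs _ hx
  have : h ⁻¹' V ∈ 𝓝 (0 : ℝ) := by
    have := hh.continuousAt (x := (0:ℝ))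
    exact this.preimage_mem_nhds (by simpa using hV)
  obtain ⟨ε, hε, hball⟩ := Metric.mem_nhds_iff.mp this
  refine ⟨fun _ => ε, fun _ => hε, ?_⟩
  intro y hy
  apply hVs
  intro n
  have : h (y n) - h (x n) = h (y n - x n) := by rw [map_sub]
  rw [this]
  exact hball (by simpa [Real.dist_eq] using hy n)

/-- for a continuous homomorphism `h : ℝ → H` into a topological abelian
group `H`, the topology `𝒯_H` on `ℝ^(ℕ)` induced by the embedding
`(x_k) ↦ ((x_k), (h(x_k)))` into `L_G(s) × 𝔉₀(H)` is weaker than the box topology; in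
particular `(x_k) ↦ (h(x_k))` is continuous from `(ℝ^(ℕ), box)` to `𝔉₀(H)`. -/
theorem stmt15 {H : Type*} [AddCommGroup H] [TopologicalSpace H] [IsTopologicalAddGroup H]
    (ν : TopologicalSpace (ℕ →₀ ℝ)) (hν : IsNuTopology ν)
    (h : ℝ →+ H) (hh : Continuous h) :
    Continuous[boxTopology,
        TopologicalSpace.induced
          (fun x : ℕ →₀ ℝ => ((x, fun k => h (x k)) : (ℕ →₀ ℝ) × (ℕ → H)))
          (@instTopologicalSpaceProd (ℕ →₀ ℝ) (ℕ → H) ν (uniformSeqTopology H))]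
      (id : (ℕ →₀ ℝ) → (ℕ →₀ ℝ)) ∧
    Continuous[boxTopology, uniformSeqTopology H]
      (fun x : ℕ →₀ ℝ => fun k : ℕ => h (x k)) := by
  have h2 := uniform_cont h hh
  obtain ⟨⟨hadd, hsmul, hconv⟩, _, _⟩ := hν
  have h1 : Continuous[boxTopology, ν] (id : (ℕ →₀ ℝ) → (ℕ →₀ ℝ)) :=
    continuous_id_iff_le.mpr (box_le_of_LC ν hadd hsmul hconv)
  refine ⟨?_, h2⟩
  rw [continuous_induced_rng]
  exact @Continuous.prodMk _ _ _ ν (uniformSeqTopology H) boxTopology _ _ h1 h2
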